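/- Let p ∈ [2,∞) and A, B ∈ M_n(ℂ). Then w_p([[A, B],[B, A]]) ≤ 2^{1 - 2/p}( w_p(A+B)^p + w_p(A-B)^p )^{1/p}, and if A and B are Hermitian then w_p([[A, B],[B, A]]) = ( w_p(A+B)^p + w_p(A-B)^p )^{1/p}. -/

import Mathlib

open Matrix
open scoped ComplexOrder

variable {n : Type*} [Fintype n] [DecidableEq n]

/-- Real part of a matrix: `Re(B) = (B + Bᴴ)/2`. -/
noncomputable def matRe (B : Matrix n n ℂ) : Matrix n n ℂ := (1/2 : ℂ) • (B + Bᴴ)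

/-- Generalized numerical radius associated to a norm-like function `N`. -/
noncomputable def wN (N : Matrix n n ℂ → ℝ) (A : Matrix n n ℂ) : ℝ :=
  ⨆ θ : ℝ, N (matRe (Complex.exp (θ * Complex.I) • A))

/-- `N` is unitarily invariant. -/
def UnitarilyInvariant (N : Matrix n n ℂ → ℝ) : Prop :=
  ∀ (U V : Matrix.unitaryGroup n ℂ) (A : Matrix n n ℂ), N ((U : Matrix n n ℂ) * A * (V : Matrix n n ℂ)) = N A

/-- Real power of a positive definite matrix via spectral decomposition. -/
noncomputable def rpowM {A : Matrix n n ℂ} (hA : A.PosDef) (t : ℝ) : Matrix n n ℂ :=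
  (hA.1.eigenvectorUnitary : Matrix n n ℂ) *
    Matrix.diagonal (fun i => ((hA.1.eigenvalues i ^ t : ℝ) : ℂ)) *
    (hA.1.eigenvectorUnitary : Matrix n n ℂ)ᴴ

/-- Schatten `p`-norm of a matrix, via its singular values. -/
noncomputable def schatten (p : ℝ) (A : Matrix n n ℂ) : ℝ :=
  (∑ i, Real.sqrt ((Matrix.posSemidef_conjTranspose_mul_self A).1.eigenvalues i) ^ p) ^ (1/p)

/-- Schatten `p` generalized numerical radius. -/
noncomputable def wp (p : ℝ) (A : Matrix n n ℂ) : ℝ := wN (schatten p) A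

section AuxProofs
open Polynomial
variable {m : Type*} [Fintype m] [DecidableEq m]

lemma charpoly_conj_of (U V M : Matrix m m ℂ) (hVU : V * U = 1) (hUV : U * V = 1) :
    (V * M * U).charpoly = M.charpoly := by
  let f : Matrix m m ℂ →+* Matrix m m ℂ[X] := (C : ℂ →+* ℂ[X]).mapMatrix
  have hkey : charmatrix (V * M * U) = f V * charmatrix M * f U := by
    show Matrix.scalar m (X : ℂ[X]) - f (V * M * U) =
      f V * (Matrix.scalar m (X : ℂ[X]) - f M) * f U
    rw [mul_sub, sub_mul, _root_.map_mul f, _root_.map_mul f]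
    congr 1
    rw [← scalar_commute (X : ℂ[X]) (fun r => Commute.all _ _) (f V), mul_assoc,
      ← _root_.map_mul f, hVU, _root_.map_one f, mul_one]
  have hdet : (f V).det * (f U).det = 1 := by
    rw [← det_mul, ← _root_.map_mul f, hVU, _root_.map_one f, det_one]
  show (charmatrix (V * M * U)).det = (charmatrix M).det
  rw [hkey, det_mul, det_mul]
  rw [mul_comm (f V).det, mul_assoc, hdet, mul_one]

lemma charpoly_diagonal (d : m → ℂ) :
    (Matrix.diagonal d).charpoly = ∏ i, (X - C (d i)) := by
  have h : charmatrix (Matrix.diagonal d) = Matrix.diagonal (fun i => X - C (d i)) := by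
    ext i j
    rcases eq_or_ne i j with rfl | hij
    · simp
    · simp [hij, charmatrix_apply_ne _ _ _ hij]
  show (charmatrix (Matrix.diagonal d)).det = _
  rw [h, det_diagonal]

lemma charpoly_herm_roots {H : Matrix m m ℂ} (hH : H.IsHermitian) :
    H.charpoly.roots = Finset.univ.val.map (fun i => (hH.eigenvalues i : ℂ)) := by
  have h1 : H.charpoly = (Matrix.diagonal (RCLike.ofReal ∘ hH.eigenvalues) :
      Matrix m m ℂ).charpoly := by
    conv_lhs => rw [hH.spectral_theorem]
    exact charpoly_conj_of _ _ _
      ((Matrix.mem_unitaryGroup_iff).mp (hH.eigenvectorUnitary).2)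
      ((Matrix.mem_unitaryGroup_iff').mp (hH.eigenvectorUnitary).2)
  rw [h1, _root_.charpoly_diagonal]
  have : ∏ i, ((X : ℂ[X]) - C ((RCLike.ofReal ∘ hH.eigenvalues) i)) =
      ((Finset.univ.val.map (fun i => (hH.eigenvalues i : ℂ))).map (fun a => X - C a)).prod := by
    rw [Multiset.map_map]
    rfl
  rw [this, roots_multiset_prod_X_sub_C]

lemma sum_f_eigs {H : Matrix m m ℂ} (hH : H.IsHermitian) (f : ℝ → ℝ) :
    ∑ i, f (hH.eigenvalues i) = (H.charpoly.roots.map (fun z => f z.re)).sum := by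
  rw [charpoly_herm_roots hH, Multiset.map_map]
  rw [show ((fun z : ℂ => f z.re) ∘ fun i => (hH.eigenvalues i : ℂ)) =
    fun i => f (hH.eigenvalues i) by funext i; simp]
  rfl

noncomputable def specSum (p : ℝ) (A : Matrix m m ℂ) : ℝ :=
  ∑ i, Real.sqrt ((Matrix.posSemidef_conjTranspose_mul_self A).1.eigenvalues i) ^ p

lemma specSum_nonneg (p : ℝ) (A : Matrix m m ℂ) : 0 ≤ specSum p A :=
  Finset.sum_nonneg fun i _ => Real.rpow_nonneg (Real.sqrt_nonneg _) _

lemma specSum_eq_roots (p : ℝ) (A : Matrix m m ℂ) :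
    specSum p A = ((Aᴴ * A).charpoly.roots.map (fun z => Real.sqrt z.re ^ p)).sum :=
  sum_f_eigs (Matrix.posSemidef_conjTranspose_mul_self A).1 (fun x => Real.sqrt x ^ p)

lemma specSum_congr {m' : Type*} [Fintype m'] [DecidableEq m'] (p : ℝ)
    (A : Matrix m m ℂ) (B : Matrix m' m' ℂ)
    (h : (Aᴴ * A).charpoly = (Bᴴ * B).charpoly) : specSum p A = specSum p B := by
  rw [specSum_eq_roots, specSum_eq_roots, h]

lemma specSum_fromBlocks_diag {l : Type*} [Fintype l] [DecidableEq l] (p : ℝ)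
    (P Q : Matrix l l ℂ) :
    specSum p (Matrix.fromBlocks P 0 0 Q) = specSum p P + specSum p Q := by
  rw [specSum_eq_roots, specSum_eq_roots, specSum_eq_roots]
  have h1 : (Matrix.fromBlocks P 0 0 Q)ᴴ * (Matrix.fromBlocks P 0 0 Q) =
      Matrix.fromBlocks (Pᴴ * P) 0 0 (Qᴴ * Q) := by
    simp [Matrix.fromBlocks_conjTranspose, Matrix.fromBlocks_multiply]
  have h2 : (Matrix.fromBlocks (Pᴴ * P) 0 0 (Qᴴ * Q)).charpoly =
      (Pᴴ * P).charpoly * (Qᴴ * Q).charpoly := by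
    show (charmatrix _).det = (charmatrix _).det * (charmatrix _).det
    rw [charmatrix_fromBlocks,
      show ((0 : Matrix l l ℂ).map ⇑(C : ℂ →+* ℂ[X])) = 0 from Matrix.map_zero _ (map_zero C),
      neg_zero]
    exact Matrix.det_fromBlocks_zero₂₁ _ _ _
  rw [h1, h2, Polynomial.roots_mul (mul_ne_zero (Matrix.charpoly_monic _).ne_zero
    (Matrix.charpoly_monic _).ne_zero), Multiset.map_add, Multiset.sum_add]

lemma charpoly_real_smul_herm (c : ℝ) {H : Matrix m m ℂ} (hH : H.IsHermitian) :
    (((c : ℂ)) • H).charpoly.roots =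
      Finset.univ.val.map (fun i => ((c * hH.eigenvalues i : ℝ) : ℂ)) := by
  have h1 : ((c : ℂ)) • H =
      (hH.eigenvectorUnitary : Matrix m m ℂ) *
        Matrix.diagonal (fun i => ((c * hH.eigenvalues i : ℝ) : ℂ)) *
        (star (hH.eigenvectorUnitary : Matrix m m ℂ)) := by
    have hd : ((c : ℂ)) • Matrix.diagonal (RCLike.ofReal ∘ hH.eigenvalues) =
        Matrix.diagonal (fun i => ((c * hH.eigenvalues i : ℝ) : ℂ)) := by
      ext i j
      rcases eq_or_ne i j with rfl | hij
      · simp [Function.comp, Complex.ofReal_mul]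
      · simp [Matrix.diagonal_apply_ne _ hij]
    conv_lhs => rw [hH.spectral_theorem]
    rw [Unitary.conjStarAlgAut_apply, ← smul_mul_assoc, ← mul_smul_comm, hd]
  rw [h1, charpoly_conj_of _ _ _
      ((Matrix.mem_unitaryGroup_iff).mp (hH.eigenvectorUnitary).2)
      ((Matrix.mem_unitaryGroup_iff').mp (hH.eigenvectorUnitary).2),
    _root_.charpoly_diagonal]
  rw [show ∏ i, ((X : ℂ[X]) - C (((c * hH.eigenvalues i : ℝ) : ℂ))) =
      ((Finset.univ.val.map (fun i => ((c * hH.eigenvalues i : ℝ) : ℂ))).map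
        (fun a => X - C a)).prod by rw [Multiset.map_map]; rfl,
    roots_multiset_prod_X_sub_C]

lemma specSum_smul (p : ℝ) (r : ℝ) (M : Matrix m m ℂ) :
    specSum p ((r : ℂ) • M) = |r| ^ p * specSum p M := by
  have hgram : ((r : ℂ) • M)ᴴ * ((r : ℂ) • M) = (((r * r : ℝ) : ℂ)) • (Mᴴ * M) := by
    rw [Matrix.conjTranspose_smul, Matrix.smul_mul, Matrix.mul_smul, smul_smul]
    push_cast
    rw [Complex.star_def, Complex.conj_ofReal]
  have key : ∀ i, Real.sqrt ((((r * r) *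
        (Matrix.posSemidef_conjTranspose_mul_self M).1.eigenvalues i : ℝ) : ℂ).re) ^ p =
      |r| ^ p * Real.sqrt ((Matrix.posSemidef_conjTranspose_mul_self M).1.eigenvalues i) ^ p := by
    intro i
    rw [Complex.ofReal_re, Real.sqrt_mul (mul_self_nonneg r), Real.sqrt_mul_self_eq_abs,
      Real.mul_rpow (abs_nonneg r) (Real.sqrt_nonneg _)]
  rw [specSum_eq_roots, hgram,
    charpoly_real_smul_herm (r * r) (Matrix.posSemidef_conjTranspose_mul_self M).1,
    Multiset.map_map]
  unfold specSum
  rw [Finset.mul_sum]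
  exact congrArg Multiset.sum (Multiset.map_congr rfl (fun i _ => key i))

lemma specSum_fromBlocks_herm (p : ℝ) (X Y : Matrix m m ℂ) (hX : Xᴴ = X) (hY : Yᴴ = Y) :
    specSum p (Matrix.fromBlocks X Y Y X) = specSum p (X + Y) + specSum p (X - Y) := by
  set W : Matrix (m ⊕ m) (m ⊕ m) ℂ := Matrix.fromBlocks 1 1 1 (-1) with hW
  set V : Matrix (m ⊕ m) (m ⊕ m) ℂ := (1/2 : ℂ) • W with hV
  set M : Matrix (m ⊕ m) (m ⊕ m) ℂ := Matrix.fromBlocks X Y Y X with hM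
  have hWW : W * W = (2 : ℂ) • 1 := by
    rw [hW, Matrix.fromBlocks_multiply, ← Matrix.fromBlocks_one (l := m) (m := m),
      Matrix.fromBlocks_smul]
    exact Matrix.fromBlocks_inj.mpr ⟨by simp [two_smul], by simp, by simp, by simp [two_smul]⟩
  have hVW : V * W = 1 := by
    rw [hV, Matrix.smul_mul, hWW, smul_smul]
    norm_num
  have hWV : W * V = 1 := by
    rw [hV, Matrix.mul_smul, hWW, smul_smul]
    norm_num
  have hVH : Vᴴ = V := by
    rw [hV, Matrix.conjTranspose_smul, hW, Matrix.fromBlocks_conjTranspose]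
    norm_num
  have hWH : Wᴴ = W := by
    rw [hW, Matrix.fromBlocks_conjTranspose]
    norm_num
  have hVV : V * V = (1/2 : ℂ) • 1 := by
    rw [hV, Matrix.smul_mul, Matrix.mul_smul, hWW, smul_smul, smul_smul]
    norm_num
  have hMW : W * M * W = Matrix.fromBlocks ((2:ℂ) • (X + Y)) 0 0 ((2:ℂ) • (X - Y)) := by
    rw [hW, hM, Matrix.fromBlocks_multiply, Matrix.fromBlocks_multiply]
    refine Matrix.fromBlocks_inj.mpr ⟨?_, ?_, ?_, ?_⟩ <;>
      · simp only [Matrix.one_mul, Matrix.mul_one, Matrix.neg_mul, Matrix.mul_neg,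
          Matrix.mul_one, two_smul, smul_sub, smul_add, Matrix.add_mul, Matrix.mul_add]
        abel
  have hVMW : V * M * W = Matrix.fromBlocks (X + Y) 0 0 (X - Y) := by
    rw [hV, Matrix.smul_mul, Matrix.smul_mul, hMW, Matrix.fromBlocks_smul,
      smul_smul, smul_smul]
    norm_num
  have hMH : Mᴴ = M := by
    rw [hM, Matrix.fromBlocks_conjTranspose, hX, hY]
  have hgram : (V * M * W)ᴴ * (V * M * W) = V * (Mᴴ * M) * W := by
    calc (V * M * W)ᴴ * (V * M * W)
        = (W * (Mᴴ * V)) * (V * (M * W)) := by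
          rw [Matrix.conjTranspose_mul, Matrix.conjTranspose_mul, hWH, hVH]
          simp only [Matrix.mul_assoc]
      _ = W * ((Mᴴ * (V * V)) * (M * W)) := by simp only [Matrix.mul_assoc]
      _ = W * ((Mᴴ * ((1/2:ℂ) • 1)) * (M * W)) := by rw [hVV]
      _ = (1/2:ℂ) • (W * (Mᴴ * (M * W))) := by
          simp only [Matrix.mul_smul, Matrix.smul_mul, Matrix.mul_one]
      _ = V * (Mᴴ * M) * W := by
          rw [hV]
          simp only [Matrix.smul_mul, Matrix.mul_assoc]
  have h1 : specSum p M = specSum p (V * M * W) :=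
    specSum_congr p M (V * M * W)
      (by rw [hgram, charpoly_conj_of W V _ hVW hWV])
  rw [h1, hVMW, specSum_fromBlocks_diag]

lemma schatten_eq_specSum (p : ℝ) (A : Matrix m m ℂ) :
    schatten p A = specSum p A ^ (1/p) := rfl

lemma schatten_nonneg (p : ℝ) (A : Matrix m m ℂ) : 0 ≤ schatten p A :=
  Real.rpow_nonneg (specSum_nonneg p A) _

lemma schatten_rpow (p : ℝ) (hp : p ≠ 0) (A : Matrix m m ℂ) :
    schatten p A ^ p = specSum p A := by
  rw [schatten_eq_specSum, ← Real.rpow_mul (specSum_nonneg p A), one_div_mul_cancel hp,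
    Real.rpow_one]

lemma matRe_herm (B : Matrix m m ℂ) : (matRe B)ᴴ = matRe B := by
  unfold matRe
  rw [Matrix.conjTranspose_smul, Matrix.conjTranspose_add, Matrix.conjTranspose_conjTranspose]
  rw [show star (1/2 : ℂ) = (1/2 : ℂ) by norm_num, add_comm]

lemma matRe_add (B C : Matrix m m ℂ) : matRe (B + C) = matRe B + matRe C := by
  unfold matRe
  rw [Matrix.conjTranspose_add]
  module

lemma matRe_sub (B C : Matrix m m ℂ) : matRe (B - C) = matRe B - matRe C := by
  unfold matRe
  rw [Matrix.conjTranspose_sub]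
  module

lemma matRe_fromBlocks (A B : Matrix m m ℂ) :
    matRe (Matrix.fromBlocks A B B A) =
      Matrix.fromBlocks (matRe A) (matRe B) (matRe B) (matRe A) := by
  unfold matRe
  rw [Matrix.fromBlocks_conjTranspose, Matrix.fromBlocks_add, Matrix.fromBlocks_smul]

lemma matRe_smul_herm (c : ℂ) {H : Matrix m m ℂ} (hH : Hᴴ = H) :
    matRe (c • H) = ((c.re : ℂ)) • H := by
  unfold matRe
  rw [Matrix.conjTranspose_smul, hH, ← add_smul, smul_smul]
  congr 1
  rw [Complex.star_def, Complex.add_conj]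
  push_cast
  ring

lemma schatten_smul_real (p : ℝ) (hp : p ≠ 0) (r : ℝ) (M : Matrix m m ℂ) :
    schatten p ((r : ℂ) • M) = |r| * schatten p M := by
  rw [schatten_eq_specSum, schatten_eq_specSum, specSum_smul,
    Real.mul_rpow (Real.rpow_nonneg (abs_nonneg r) _) (specSum_nonneg p M),
    ← Real.rpow_mul (abs_nonneg r), mul_one_div_cancel hp, Real.rpow_one]

lemma sum_eigenvalues_eq_trace_re {H : Matrix m m ℂ} (hH : H.IsHermitian) :
    ∑ i, hH.eigenvalues i = H.trace.re := by
  have h := Matrix.trace_eq_sum_roots_charpoly (A := H)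
  rw [charpoly_herm_roots hH] at h
  have h2 : (Finset.univ.val.map (fun i => (hH.eigenvalues i : ℂ))).sum
      = ((∑ i, hH.eigenvalues i : ℝ) : ℂ) := by
    rw [show (Finset.univ.val.map (fun i => (hH.eigenvalues i : ℂ))).sum
      = ∑ i, ((hH.eigenvalues i : ℂ)) from rfl]
    push_cast
    rfl
  rw [h, h2, Complex.ofReal_re]

lemma trace_gram_re (N : Matrix m m ℂ) :
    (Nᴴ * N).trace.re = ∑ i, ∑ j, ‖N j i‖ ^ 2 := by
  have h1 : (Nᴴ * N).trace = ∑ i, ∑ j, star (N j i) * N j i := by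
    rw [Matrix.trace]
    simp [Matrix.mul_apply, Matrix.conjTranspose_apply, Matrix.diag]
  rw [h1]
  rw [Complex.re_sum]
  refine Finset.sum_congr rfl fun i _ => ?_
  rw [Complex.re_sum]
  refine Finset.sum_congr rfl fun j _ => ?_
  rw [Complex.star_def, mul_comm, Complex.mul_conj, Complex.normSq_eq_norm_sq]
  rw [Complex.ofReal_re]

lemma schatten_matRe_bdd (p : ℝ) (hp : 0 < p) (M : Matrix m m ℂ) :
    BddAbove (Set.range fun θ : ℝ =>
      schatten p (matRe (Complex.exp (θ * Complex.I) • M))) := by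
  set C := ∑ i, ∑ j, (‖M j i‖ + ‖M i j‖) ^ 2 with hC
  have hC0 : (0:ℝ) ≤ C := Finset.sum_nonneg fun i _ => Finset.sum_nonneg fun j _ => sq_nonneg _
  refine ⟨((Fintype.card m : ℝ) * Real.sqrt C ^ p) ^ (1/p), ?_⟩
  rintro x ⟨θ, rfl⟩
  set c := Complex.exp (θ * Complex.I) with hc
  have hcn : ‖c‖ = 1 := by
    rw [hc]
    exact Complex.norm_exp_ofReal_mul_I θ
  set N := matRe (c • M) with hN
  have hent : ∀ i j, ‖N i j‖ ≤ ‖M i j‖ + ‖M j i‖ := by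
    intro i j
    have hNij : N i j = (1/2 : ℂ) * (c * M i j + (star c * star (M j i))) := by
      simp only [hN, matRe, Matrix.smul_apply, Matrix.add_apply, Matrix.conjTranspose_apply,
        smul_eq_mul, star_mul', Complex.star_def]
    rw [hNij]
    calc ‖(1/2 : ℂ) * (c * M i j + star c * star (M j i))‖
        = (1/2) * ‖c * M i j + star c * star (M j i)‖ := by
          rw [norm_mul]
          norm_num
      _ ≤ (1/2) * (‖c * M i j‖ + ‖star c * star (M j i)‖) := by
          have := norm_add_le (c * M i j) (star c * star (M j i))
          nlinarith
      _ ≤ ‖M i j‖ + ‖M j i‖ := by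
          rw [norm_mul, norm_mul, norm_star, norm_star, hcn, one_mul, one_mul]
          nlinarith [norm_nonneg (M i j), norm_nonneg (M j i)]
  have htr : (Nᴴ * N).trace.re ≤ C := by
    rw [trace_gram_re, hC]
    refine Finset.sum_le_sum fun i _ => Finset.sum_le_sum fun j _ => ?_
    have := hent j i
    nlinarith [norm_nonneg (N j i), norm_nonneg (M j i), norm_nonneg (M i j)]
  have heig : ∀ k, (Matrix.posSemidef_conjTranspose_mul_self N).1.eigenvalues k ≤ C := by
    intro k
    have hnn : ∀ l, 0 ≤ (Matrix.posSemidef_conjTranspose_mul_self N).1.eigenvalues l :=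
      fun l => (Matrix.posSemidef_conjTranspose_mul_self N).eigenvalues_nonneg l
    have hsum := sum_eigenvalues_eq_trace_re (Matrix.posSemidef_conjTranspose_mul_self N).1
    have hle : (Matrix.posSemidef_conjTranspose_mul_self N).1.eigenvalues k
        ≤ ∑ l, (Matrix.posSemidef_conjTranspose_mul_self N).1.eigenvalues l :=
      Finset.single_le_sum (fun l _ => hnn l) (Finset.mem_univ k)
    calc _ ≤ ∑ l, (Matrix.posSemidef_conjTranspose_mul_self N).1.eigenvalues l := hle
      _ = (Nᴴ * N).trace.re := hsum
      _ ≤ C := htr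
  show schatten p N ≤ _
  rw [schatten_eq_specSum]
  refine Real.rpow_le_rpow (specSum_nonneg p N) ?_ (by positivity)
  unfold specSum
  calc ∑ k, Real.sqrt ((Matrix.posSemidef_conjTranspose_mul_self N).1.eigenvalues k) ^ p
      ≤ ∑ _k : m, Real.sqrt C ^ p := by
        refine Finset.sum_le_sum fun k _ => ?_
        exact Real.rpow_le_rpow (Real.sqrt_nonneg _)
          (Real.sqrt_le_sqrt (heig k)) hp.le
    _ = (Fintype.card m : ℝ) * Real.sqrt C ^ p := by
        rw [Finset.sum_const, Finset.card_univ, nsmul_eq_mul]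

lemma iSup_abs_cos_mul (c : ℝ) (hc : 0 ≤ c) : (⨆ θ : ℝ, |Real.cos θ| * c) = c := by
  have hb : ∀ θ : ℝ, |Real.cos θ| * c ≤ c := fun θ =>
    mul_le_of_le_one_left hc (Real.abs_cos_le_one θ)
  refine le_antisymm (Real.iSup_le hb hc) ?_
  calc c = |Real.cos (0:ℝ)| * c := by simp
    _ ≤ ⨆ θ : ℝ, |Real.cos θ| * c :=
        le_ciSup (f := fun θ : ℝ => |Real.cos θ| * c)
          ⟨c, by rintro x ⟨θ, rfl⟩; exact hb θ⟩ (0:ℝ)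

end AuxProofs

theorem wp_block_ABBA (A B : Matrix n n ℂ) {p : ℝ} (hp : 2 ≤ p) :
    wp p (Matrix.fromBlocks A B B A) ≤
      2 ^ (1 - 2/p) * (wp p (A + B) ^ p + wp p (A - B) ^ p) ^ (1/p) ∧
    (A.IsHermitian → B.IsHermitian →
      wp p (Matrix.fromBlocks A B B A) = (wp p (A + B) ^ p + wp p (A - B) ^ p) ^ (1/p)) := by
  have hp0 : (0:ℝ) < p := lt_of_lt_of_le two_pos hp
  have hpne : p ≠ 0 := ne_of_gt hp0
  have key : ∀ θ : ℝ, schatten p (matRe (Complex.exp (θ * Complex.I) •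
      Matrix.fromBlocks A B B A)) =
      (schatten p (matRe (Complex.exp (θ * Complex.I) • (A + B))) ^ p +
       schatten p (matRe (Complex.exp (θ * Complex.I) • (A - B))) ^ p) ^ (1/p) := by
    intro θ
    have h1 : matRe (Complex.exp (θ * Complex.I) • Matrix.fromBlocks A B B A) =
        Matrix.fromBlocks (matRe (Complex.exp (θ * Complex.I) • A))
          (matRe (Complex.exp (θ * Complex.I) • B))
          (matRe (Complex.exp (θ * Complex.I) • B))
          (matRe (Complex.exp (θ * Complex.I) • A)) := by
      rw [Matrix.fromBlocks_smul, matRe_fromBlocks]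
    rw [h1, schatten_eq_specSum,
      specSum_fromBlocks_herm p _ _ (matRe_herm _) (matRe_herm _),
      ← matRe_add, ← matRe_sub, ← smul_add, ← smul_sub,
      ← schatten_rpow p hpne (matRe (Complex.exp (θ * Complex.I) • (A + B))),
      ← schatten_rpow p hpne (matRe (Complex.exp (θ * Complex.I) • (A - B)))]
  have hwblock : wp p (Matrix.fromBlocks A B B A) =
      ⨆ θ : ℝ, (schatten p (matRe (Complex.exp (θ * Complex.I) • (A + B))) ^ p +
        schatten p (matRe (Complex.exp (θ * Complex.I) • (A - B))) ^ p) ^ (1/p) := by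
    unfold wp wN
    exact congrArg iSup (funext key)
  have hg0 : ∀ θ : ℝ, 0 ≤ schatten p (matRe (Complex.exp (θ * Complex.I) • (A + B))) :=
    fun θ => schatten_nonneg _ _
  have hh0 : ∀ θ : ℝ, 0 ≤ schatten p (matRe (Complex.exp (θ * Complex.I) • (A - B))) :=
    fun θ => schatten_nonneg _ _
  have hgB := schatten_matRe_bdd p hp0 (A + B)
  have hhB := schatten_matRe_bdd p hp0 (A - B)
  have hwpa : wp p (A + B) =
      ⨆ θ : ℝ, schatten p (matRe (Complex.exp (θ * Complex.I) • (A + B))) := rfl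
  have hwpb : wp p (A - B) =
      ⨆ θ : ℝ, schatten p (matRe (Complex.exp (θ * Complex.I) • (A - B))) := rfl
  have hwpa0 : 0 ≤ wp p (A + B) := by
    rw [hwpa]; exact Real.iSup_nonneg hg0
  have hwpb0 : 0 ≤ wp p (A - B) := by
    rw [hwpb]; exact Real.iSup_nonneg hh0
  have hT0 : 0 ≤ (wp p (A + B) ^ p + wp p (A - B) ^ p) ^ (1/p) :=
    Real.rpow_nonneg
      (add_nonneg (Real.rpow_nonneg hwpa0 _) (Real.rpow_nonneg hwpb0 _)) _
  constructor
  · have hle : wp p (Matrix.fromBlocks A B B A) ≤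
        (wp p (A + B) ^ p + wp p (A - B) ^ p) ^ (1/p) := by
      rw [hwblock]
      refine Real.iSup_le (fun θ => ?_) hT0
      refine Real.rpow_le_rpow
        (add_nonneg (Real.rpow_nonneg (hg0 θ) _) (Real.rpow_nonneg (hh0 θ) _)) ?_
        (by positivity)
      have h1 : schatten p (matRe (Complex.exp (θ * Complex.I) • (A + B))) ≤ wp p (A + B) := by
        rw [hwpa]; exact le_ciSup hgB θ
      have h2 : schatten p (matRe (Complex.exp (θ * Complex.I) • (A - B))) ≤ wp p (A - B) := by
        rw [hwpb]; exact le_ciSup hhB θ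
      exact add_le_add (Real.rpow_le_rpow (hg0 θ) h1 hp0.le)
        (Real.rpow_le_rpow (hh0 θ) h2 hp0.le)
    have hone : (1:ℝ) ≤ 2 ^ (1 - 2/p) := by
      calc (1:ℝ) = (2:ℝ) ^ (0:ℝ) := (Real.rpow_zero 2).symm
        _ ≤ 2 ^ (1 - 2/p) := Real.rpow_le_rpow_of_exponent_le one_le_two
            (by rw [sub_nonneg]; exact (div_le_one hp0).mpr hp)
    calc wp p (Matrix.fromBlocks A B B A) ≤ _ := hle
      _ ≤ 2 ^ (1 - 2/p) * (wp p (A + B) ^ p + wp p (A - B) ^ p) ^ (1/p) :=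
          le_mul_of_one_le_left hT0 hone
  · intro hA hB
    have hABh : (A + B)ᴴ = A + B := by rw [Matrix.conjTranspose_add, hA.eq, hB.eq]
    have hABh' : (A - B)ᴴ = A - B := by rw [Matrix.conjTranspose_sub, hA.eq, hB.eq]
    have ha00 : 0 ≤ schatten p (A + B) := schatten_nonneg _ _
    have hb00 : 0 ≤ schatten p (A - B) := schatten_nonneg _ _
    have hgθ : ∀ θ : ℝ, schatten p (matRe (Complex.exp (θ * Complex.I) • (A + B))) =
        |Real.cos θ| * schatten p (A + B) := by
      intro θ
      rw [matRe_smul_herm _ hABh, Complex.exp_ofReal_mul_I_re, schatten_smul_real p hpne]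
    have hhθ : ∀ θ : ℝ, schatten p (matRe (Complex.exp (θ * Complex.I) • (A - B))) =
        |Real.cos θ| * schatten p (A - B) := by
      intro θ
      rw [matRe_smul_herm _ hABh', Complex.exp_ofReal_mul_I_re, schatten_smul_real p hpne]
    have hwa : wp p (A + B) = schatten p (A + B) := by
      rw [hwpa]
      rw [show (fun θ : ℝ => schatten p (matRe (Complex.exp (θ * Complex.I) • (A + B)))) =
        fun θ : ℝ => |Real.cos θ| * schatten p (A + B) from funext hgθ]
      exact iSup_abs_cos_mul _ ha00
    have hwb : wp p (A - B) = schatten p (A - B) := by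
      rw [hwpb]
      rw [show (fun θ : ℝ => schatten p (matRe (Complex.exp (θ * Complex.I) • (A - B)))) =
        fun θ : ℝ => |Real.cos θ| * schatten p (A - B) from funext hhθ]
      exact iSup_abs_cos_mul _ hb00
    have hfθ : ∀ θ : ℝ,
        (schatten p (matRe (Complex.exp (θ * Complex.I) • (A + B))) ^ p +
         schatten p (matRe (Complex.exp (θ * Complex.I) • (A - B))) ^ p) ^ (1/p) =
        |Real.cos θ| * (schatten p (A + B) ^ p + schatten p (A - B) ^ p) ^ (1/p) := by
      intro θ
      rw [hgθ θ, hhθ θ, Real.mul_rpow (abs_nonneg _) ha00, Real.mul_rpow (abs_nonneg _) hb00,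
        ← mul_add, Real.mul_rpow (Real.rpow_nonneg (abs_nonneg _) _)
          (add_nonneg (Real.rpow_nonneg ha00 _) (Real.rpow_nonneg hb00 _)),
        ← Real.rpow_mul (abs_nonneg _), mul_one_div_cancel hpne, Real.rpow_one]
    rw [hwblock, hwa, hwb,
      show (fun θ : ℝ =>
        (schatten p (matRe (Complex.exp (θ * Complex.I) • (A + B))) ^ p +
         schatten p (matRe (Complex.exp (θ * Complex.I) • (A - B))) ^ p) ^ (1/p)) =
        fun θ : ℝ => |Real.cos θ| * (schatten p (A + B) ^ p + schatten p (A - B) ^ p) ^ (1/p)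
        from funext hfθ]
    exact iSup_abs_cos_mul _ (Real.rpow_nonneg
      (add_nonneg (Real.rpow_nonneg ha00 _) (Real.rpow_nonneg hb00 _)) _)
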